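/- Let X be a topological space, T : X → X a homeomorphism, U ⊆ X an open set, V ⊆ X a set whose closure is compact and contained in U, and O ⊆ X an open set containing Λ := ⋂_{n ∈ ℤ} Tⁿ(U). Then there exists L ∈ ℕ such that for every n ≥ 2L + 1 and every x ∈ X, if Tⁱx ∈ V for all integers 0 ≤ i ≤ n − 1, then Tⁱx ∈ O for all integers L ≤ i ≤ n − 1 − L. -/

import Mathlib

/-- For a homeomorphism `T` of `X`, an open set `U`, a set `V` whose
closure is compact and contained in `U`, and an open set `O` containing
`Λ = ⋂_{n ∈ ℤ} Tⁿ(U)`, there is `L ∈ ℕ` such that any orbit segment of length `n ≥ 2L+1`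
staying in `V` must lie in `O` at all times `i` with `L ≤ i ≤ n − 1 − L`. -/
theorem stmt4 {X : Type*} [TopologicalSpace X] (T : X ≃ₜ X)
    (U : Set X) (hU : IsOpen U)
    (V : Set X) (hVc : IsCompact (closure V)) (hVU : closure V ⊆ U)
    (O : Set X) (hO : IsOpen O)
    (hΛ : (⋂ n : ℤ, (T.toEquiv ^ n) '' U) ⊆ O) :
    ∃ L : ℕ, ∀ n : ℕ, 2 * L + 1 ≤ n → ∀ x : X,
      (∀ i : ℕ, i ≤ n - 1 → (⇑T)^[i] x ∈ V) →
      ∀ i : ℕ, L ≤ i → i ≤ n - 1 - L → (⇑T)^[i] x ∈ O := by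
  classical
  set K := closure V with hK
  -- continuity of all integer powers
  have hcont : ∀ m : ℤ, Continuous ⇑(T.toEquiv ^ m) := by
    intro m
    rcases m with n | n
    · have : ⇑(T.toEquiv ^ (Int.ofNat n)) = (⇑T)^[n] := by
        rw [Int.ofNat_eq_coe, zpow_natCast, ← Equiv.Perm.iterate_eq_pow]
        rfl
      rw [this]
      exact T.continuous.iterate n
    · have : ⇑(T.toEquiv ^ (Int.negSucc n)) = (⇑T.symm)^[n + 1] := by
        rw [zpow_negSucc, ← inv_pow, ← Equiv.Perm.iterate_eq_pow]
        rfl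
      rw [this]
      exact T.symm.continuous.iterate (n + 1)
  set Z : ℤ → Set X := fun m => (T.toEquiv ^ m) '' K with hZ
  have hZclosed : ∀ m : ℤ, IsClosed (Z m) := by
    intro m
    have : Z m = ⇑(T.toEquiv ^ (-m)) ⁻¹' K := by
      simp only [hZ, Equiv.image_eq_preimage_symm, zpow_neg]
      rfl
    rw [this]
    exact isClosed_closure.preimage (hcont (-m))
  have hK'c : IsCompact (K ∩ Oᶜ) := hVc.inter_right (isClosed_compl_iff.mpr hO)
  have hempty : (K ∩ Oᶜ) ∩ ⋂ m, Z m = ∅ := by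
    apply Set.eq_empty_of_forall_notMem
    rintro y ⟨⟨-, hyO⟩, hyZ⟩
    apply hyO
    apply hΛ
    simp only [Set.mem_iInter] at hyZ ⊢
    intro m
    exact Set.image_mono hVU (hyZ m)
  obtain ⟨t, ht⟩ := hK'c.elim_finite_subfamily_closed Z hZclosed hempty
  refine ⟨t.sup Int.natAbs, ?_⟩
  intro n hn x hx i hiL hiU
  set L := t.sup Int.natAbs with hL
  clear_value L
  -- the key membership claim
  have key : ∀ m : ℤ, m.natAbs ≤ L → (⇑T)^[i] x ∈ Z m := by
    intro m hm
    have hmle : (m : ℤ) ≤ L := le_trans (Int.le_natAbs) (by exact_mod_cast hm)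
    have hiL' : (L : ℤ) ≤ i := by exact_mod_cast hiL
    set j := ((i : ℤ) - m).toNat with hj
    clear_value j
    have hj' : (j : ℤ) = (i : ℤ) - m := by
      rw [hj]; exact Int.toNat_of_nonneg (by omega)
    have hjn : j ≤ n - 1 := by omega
    have e1 : ∀ k : ℕ, (⇑T)^[k] x = (T.toEquiv ^ (k : ℤ)) x := by
      intro k
      rw [zpow_natCast, ← Equiv.Perm.iterate_eq_pow]
      rfl
    refine ⟨(⇑T)^[j] x, subset_closure (hx j hjn), ?_⟩
    have hsum : m + (j : ℤ) = (i : ℤ) := by omega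
    rw [e1 j, e1 i, ← Equiv.Perm.mul_apply, ← zpow_add, hsum]
  by_contra hyO
  have hyK : (⇑T)^[i] x ∈ K := subset_closure (hx i (by omega))
  have : (⇑T)^[i] x ∈ (K ∩ Oᶜ) ∩ ⋂ m ∈ t, Z m := by
    refine ⟨⟨hyK, hyO⟩, ?_⟩
    simp only [Set.mem_iInter]
    intro m hm
    exact key m (hL ▸ Finset.le_sup hm)
  rw [ht] at this
  exact this
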